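/- For all n, k, d ∈ ℕ and any two sparse inputs (idx, val) and (idx', val') with idx ≠ idx' as functions Fin (n·k) → Fin d, the traces of the Linear algorithm on the two inputs are distinct lists; consequently, the two Dirac probability measures μ, ν on the (discrete) type of traces concentrated at the two executions' traces satisfy ⨆_{A} |μ(A) − ν(A)| = 1, i.e., the statistical distance between the two access-pattern distributions is 1, so the Linear algorithm on sparse gradients is not δ-statistically oblivious for any δ < 1. -/

import Mathlib

open MeasureTheory

/-- The two arrays appearing in the Linear aggregation algorithm. -/
inductive Tag : Type
  | G
  | Gstar
deriving DecidableEq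

/-- A memory operation: read or write. -/
inductive Op : Type
  | read
  | write
deriving DecidableEq

/-- A memory access: a cell (array tag together with a position) and an operation. -/
abbrev Access : Type := (Tag × ℕ) × Op

/-- A trace (memory access pattern) is a finite list of memory accesses. -/
abbrev Trace : Type := List Access

/-- Traces form a discrete measurable space. -/
instance : MeasurableSpace Trace := ⊤

/-- One step of the Linear algorithm on sparse gradients: for `t ∈ Fin (n·k)`,
emit the accesses `[(G, t, read), (G⋆, idx t, read), (G⋆, idx t, write)]` and
update `G⋆[idx t] := G⋆[idx t] + val t`. -/
def sparseStep {n k d : ℕ} (idx : Fin (n * k) → Fin d) (val : Fin (n * k) → ℝ)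
    (s : (Fin d → ℝ) × Trace) (t : Fin (n * k)) : (Fin d → ℝ) × Trace :=
  (Function.update s.1 (idx t) (s.1 (idx t) + val t),
   s.2 ++ [((Tag.G, (t : ℕ)), Op.read),
           ((Tag.Gstar, ((idx t) : ℕ)), Op.read),
           ((Tag.Gstar, ((idx t) : ℕ)), Op.write)])

/-- Running the Linear algorithm on sparse input `(idx, val)`, starting from
`G⋆ = 0` and the empty trace. -/
def sparseRun {n k d : ℕ} (idx : Fin (n * k) → Fin d) (val : Fin (n * k) → ℝ) :
    (Fin d → ℝ) × Trace :=
  List.foldl (sparseStep idx val) ((0 : Fin d → ℝ), ([] : Trace)) (List.finRange (n * k))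

/-- The trace of the Linear algorithm on sparse input `(idx, val)`. -/
def sparseTrace {n k d : ℕ} (idx : Fin (n * k) → Fin d) (val : Fin (n * k) → ℝ) : Trace :=
  (sparseRun idx val).2

lemma foldl_trace {n k d : ℕ} (idx : Fin (n * k) → Fin d) (val : Fin (n * k) → ℝ) :
    ∀ (l : List (Fin (n * k))) (s : (Fin d → ℝ) × Trace),
      (List.foldl (sparseStep idx val) s l).2 =
        s.2 ++ l.flatMap (fun (t : Fin (n * k)) =>
          [((Tag.G, (t : ℕ)), Op.read),
           ((Tag.Gstar, ((idx t) : ℕ)), Op.read),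
           ((Tag.Gstar, ((idx t) : ℕ)), Op.write)]) := by
  intro l
  induction l with
  | nil => intro s; simp
  | cons a l ih =>
    intro s
    simp [List.foldl_cons, ih, sparseStep]

lemma sparseTrace_eq {n k d : ℕ} (idx : Fin (n * k) → Fin d) (val : Fin (n * k) → ℝ) :
    sparseTrace idx val =
      (List.finRange (n * k)).flatMap (fun (t : Fin (n * k)) =>
        [((Tag.G, (t : ℕ)), Op.read),
         ((Tag.Gstar, ((idx t) : ℕ)), Op.read),
         ((Tag.Gstar, ((idx t) : ℕ)), Op.write)]) := by
  simp [sparseTrace, sparseRun, foldl_trace]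

lemma filterMap_trace {n k d : ℕ} (idx : Fin (n * k) → Fin d) (val : Fin (n * k) → ℝ) :
    (sparseTrace idx val).filterMap
      (fun a => if a.2 = Op.write then some a.1.2 else none) =
      (List.finRange (n * k)).map (fun t => ((idx t : ℕ))) := by
  rw [sparseTrace_eq, List.filterMap_flatMap]
  simp [List.filterMap_cons]
  induction List.finRange (n * k) with
  | nil => rfl
  | cons a l ih => simp [ih]

lemma trace_ne {n k d : ℕ} (idx idx' : Fin (n * k) → Fin d) (val val' : Fin (n * k) → ℝ)
    (h : idx ≠ idx') : sparseTrace idx val ≠ sparseTrace idx' val' := by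
  intro heq
  apply h
  have key := filterMap_trace idx val
  rw [heq, filterMap_trace idx' val'] at key
  funext t
  have := List.map_inj_left.mp key.symm t (List.mem_finRange t)
  exact Fin.val_injective this

/-- The Linear algorithm is **not** oblivious on sparse gradients: any two
inputs with different index sequences produce distinct traces, and the two
Dirac probability measures concentrated at these traces are at statistical
distance `⨆ A, |μ(A) − ν(A)| = 1`; hence the algorithm is not δ-statistically
oblivious for any `δ < 1`. -/
theorem linear_sparse_not_oblivious (n k d : ℕ)
    (idx idx' : Fin (n * k) → Fin d) (val val' : Fin (n * k) → ℝ)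
    (h : idx ≠ idx') :
    sparseTrace idx val ≠ sparseTrace idx' val' ∧
      (⨆ A : Set Trace,
        |((Measure.dirac (sparseTrace idx val)) A).toReal -
          ((Measure.dirac (sparseTrace idx' val')) A).toReal|) = 1 := by
  classical
  have hne := trace_ne idx idx' val val' h
  refine ⟨hne, ?_⟩
  have hmeas : ∀ s : Set Trace, MeasurableSet s := fun s => trivial
  have hval : ∀ (x : Trace) (A : Set Trace),
      ((Measure.dirac x) A).toReal = if x ∈ A then 1 else 0 := by
    intro x A
    rw [Measure.dirac_apply' x (hmeas A)]
    by_cases hx : x ∈ A <;> simp [Set.indicator, hx]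
  apply le_antisymm
  · apply ciSup_le
    intro A
    rw [hval, hval]
    split_ifs <;> simp
  · have : |((Measure.dirac (sparseTrace idx val)) {sparseTrace idx val}).toReal -
        ((Measure.dirac (sparseTrace idx' val')) {sparseTrace idx val}).toReal| = 1 := by
      rw [hval, hval]
      simp [Ne.symm hne]
    rw [← this]
    apply le_ciSup (f := fun A : Set Trace =>
      |((Measure.dirac (sparseTrace idx val)) A).toReal -
        ((Measure.dirac (sparseTrace idx' val')) A).toReal|)
    refine ⟨1, ?_⟩
    rintro x ⟨A, rfl⟩
    dsimp only
    rw [hval, hval]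
    split_ifs <;> simp
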